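/- Let Γ be a simple graph of order n and let λ be the spectral radius of Γ (the largest eigenvalue of the adjacency matrix of Γ). Then every global defensive alliance S in Γ satisfies |S| ≥ ⌈n/(λ+2)⌉; in particular the global defensive alliance number satisfies γ_a(Γ) ≥ ⌈n/(λ+2)⌉. -/

import Mathlib

open Finset SimpleGraph
open scoped Matrix

/-- `μ` is the second smallest (counted with multiplicity) value of the family `e`. -/
def IsSecondSmallest {ι : Type*} (e : ι → ℝ) (μ : ℝ) : Prop :=
  ∃ i₀ i₁ : ι, i₀ ≠ i₁ ∧ e i₀ ≤ μ ∧ e i₁ = μ ∧ ∀ j : ι, j ≠ i₀ → μ ≤ e j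

/-- `lam` is the largest value of the family `e`. -/
def IsLargest {ι : Type*} (e : ι → ℝ) (lam : ℝ) : Prop :=
  (∃ i : ι, e i = lam) ∧ ∀ i : ι, e i ≤ lam

/-- Rayleigh bound: for a real symmetric matrix, the quadratic form is bounded by the
largest eigenvalue times the squared norm. -/
lemma rayleigh_bound {m : Type*} [Fintype m] [DecidableEq m] {A : Matrix m m ℝ}
    (hA : A.IsHermitian) (lam : ℝ) (hl : ∀ i, hA.eigenvalues i ≤ lam) (x : m → ℝ) :
    x ⬝ᵥ (A *ᵥ x) ≤ lam * (x ⬝ᵥ x) := by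
  set B : Matrix m m ℝ := (hA.eigenvectorUnitary : Matrix m m ℝ) with hB
  have h1 : B * star B = 1 := Matrix.mem_unitaryGroup_iff.mp hA.eigenvectorUnitary.2
  set y : m → ℝ := star B *ᵥ x with hy
  have key : ∀ z : m → ℝ, x ⬝ᵥ (B *ᵥ z) = y ⬝ᵥ z := by
    intro z
    simp only [hy, dotProduct, Matrix.mulVec, dotProduct, Matrix.star_apply,
      star_trivial, Finset.mul_sum, Finset.sum_mul]
    rw [Finset.sum_comm]
    apply Finset.sum_congr rfl
    intro i _
    apply Finset.sum_congr rfl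
    intro j _
    ring
  have hyy : y ⬝ᵥ y = x ⬝ᵥ x := by
    rw [dotProduct_comm, ← key y, hy, Matrix.mulVec_mulVec, h1, Matrix.one_mulVec]
  have hAx : x ⬝ᵥ (A *ᵥ x) =
      ∑ i, hA.eigenvalues i * (y i * y i) := by
    conv_lhs => rw [hA.spectral_theorem, Unitary.conjStarAlgAut_apply]
    rw [← hB, ← Matrix.mulVec_mulVec, ← Matrix.mulVec_mulVec, key]
    simp only [dotProduct, Matrix.mulVec_diagonal, Function.comp_apply,
      RCLike.ofReal_real_eq_id, id_eq, ← hy]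
    apply Finset.sum_congr rfl
    intro i _
    ring
  rw [hAx, ← hyy]
  have : lam * (y ⬝ᵥ y) = ∑ i, lam * (y i * y i) := by
    simp [dotProduct, Finset.mul_sum]
  rw [this]
  apply Finset.sum_le_sum
  intro i _
  have h2 : 0 ≤ y i * y i := mul_self_nonneg _
  exact mul_le_mul_of_nonneg_right (hl i) h2

theorem stmt_3 {V : Type*} [Fintype V] [DecidableEq V]
    (G : SimpleGraph V) [DecidableRel G.Adj]
    (n : ℕ) (hn : Fintype.card V = n)
    (lam : ℝ)
    (hlam : ∃ hA : (G.adjMatrix ℝ).IsHermitian, IsLargest hA.eigenvalues lam)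
    (S : Finset V) (hS : S.Nonempty)
    (hdef : ∀ v ∈ S, (G.neighborFinset v \ S).card ≤ (G.neighborFinset v ∩ S).card + 1)
    (hglob : ∀ v ∉ S, ∃ u ∈ S, G.Adj v u)
    :
    ⌈(n : ℝ) / (lam + 2)⌉ ≤ (S.card : ℤ) := by
  obtain ⟨hA, hex, hub⟩ := hlam
  -- lam ≥ 0, using the Rayleigh bound with a single vertex
  obtain ⟨v₀, hv₀⟩ := hS
  have hlam0 : 0 ≤ lam := by
    have := rayleigh_bound hA lam hub (Pi.single v₀ 1)
    have h1 : (Pi.single v₀ 1 : V → ℝ) ⬝ᵥ (G.adjMatrix ℝ *ᵥ Pi.single v₀ 1) = 0 := by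
      simp only [dotProduct, Matrix.mulVec_single, Pi.single_apply, mul_ite, mul_one,
        mul_zero, ite_mul, one_mul, zero_mul, adjMatrix_apply]
      apply Finset.sum_eq_zero
      intro i _
      by_cases h : i = v₀
      · subst h; simp
      · simp [h]
    have h2 : (Pi.single v₀ 1 : V → ℝ) ⬝ᵥ (Pi.single v₀ 1 : V → ℝ) = 1 := by
      simp [dotProduct, Pi.single_apply]
    rw [h1, h2, mul_one] at this
    exact this
  have hpos : 0 < lam + 2 := by linarith
  -- indicator vector of S
  set x : V → ℝ := fun v => if v ∈ S then 1 else 0 with hx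
  have hxx : x ⬝ᵥ x = (S.card : ℝ) := by
    simp [hx, dotProduct, ite_mul, Finset.sum_ite_mem]
  have hxAx : x ⬝ᵥ (G.adjMatrix ℝ *ᵥ x) =
      ∑ u ∈ S, ((G.neighborFinset u ∩ S).card : ℝ) := by
    have h₁ : ∀ u : V, ∑ w ∈ G.neighborFinset u, (if w ∈ S then (1:ℝ) else 0)
        = ((G.neighborFinset u ∩ S).card : ℝ) := by
      intro u; rw [Finset.sum_boole, Finset.filter_mem_eq_inter]
    have h₂ : ∀ u : V, (if u ∈ S then (1:ℝ) else 0) * ((G.neighborFinset u ∩ S).card : ℝ)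
        = if u ∈ S then ((G.neighborFinset u ∩ S).card : ℝ) else 0 := by
      intro u; split <;> simp
    simp only [dotProduct, adjMatrix_mulVec_apply, hx, h₁, h₂]
    rw [Finset.sum_ite_mem, Finset.univ_inter]
  -- counting bound
  have hSc : Sᶜ.card ≤ ∑ u ∈ S, (G.neighborFinset u \ S).card := by
    have hsub : Sᶜ ⊆ S.biUnion (fun u => G.neighborFinset u \ S) := by
      intro v hv
      rw [Finset.mem_compl] at hv
      obtain ⟨u, hu, hadj⟩ := hglob v hv
      exact Finset.mem_biUnion.mpr ⟨u, hu, by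
        simp [Finset.mem_sdiff, mem_neighborFinset, hadj.symm, hv]⟩
    calc Sᶜ.card ≤ (S.biUnion (fun u => G.neighborFinset u \ S)).card :=
          Finset.card_le_card hsub
      _ ≤ ∑ u ∈ S, (G.neighborFinset u \ S).card := Finset.card_biUnion_le
  have hcount : n ≤ 2 * S.card + ∑ u ∈ S, (G.neighborFinset u ∩ S).card := by
    have h2 : ∑ u ∈ S, (G.neighborFinset u \ S).card
        ≤ ∑ u ∈ S, ((G.neighborFinset u ∩ S).card + 1) :=
      Finset.sum_le_sum hdef
    have h3 : n = S.card + Sᶜ.card := by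
      rw [← hn, ← Finset.card_add_card_compl S]
    rw [Finset.sum_add_distrib, Finset.sum_const, smul_eq_mul, mul_one] at h2
    omega
  -- Rayleigh bound
  have hray := rayleigh_bound hA lam hub x
  rw [hxAx, hxx] at hray
  have hn' : (n : ℝ) ≤ (lam + 2) * S.card := by
    have hc : (n : ℝ) ≤ 2 * S.card + ∑ u ∈ S, ((G.neighborFinset u ∩ S).card : ℝ) := by
      have := hcount
      push_cast
      exact_mod_cast Nat.cast_le.mpr this |>.trans_eq (by push_cast; ring)
    nlinarith
  rw [Int.ceil_le]
  push_cast
  rw [div_le_iff₀ hpos]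
  linarith
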